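/- Let $A \subseteq \Sigma^*$ be a set of words over a finite alphabet $\Sigma$ that is Markovian: $A$ is closed under prefixes and for each letter $x \in \Sigma$ there is a set $\Sigma_x \subseteq \Sigma$ such that a word in $A$ ending in $x$ extends to a word in $A$ of one greater length exactly by appending a letter of $\Sigma_x$. Let $\alpha > 1$ and suppose for each $x \in \Sigma$ there is $r(x) \geq 1$ such that the number of $r(x)$-tuples of letters that can follow $x$ in words of $A$ is strictly less than $\alpha^{r(x)}$. Then $\limsup_{N\to\infty} |A_N|^{1/N} < \alpha$, where $A_N$ is the set of words of length $N$ in $A$. -/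

import Mathlib

open Filter

namespace Stmt10Aux

variable {S : Type*} [Fintype S] (A : Set (List S))

/-- Tuples of length `n` that can follow letter `x` in words of `A`. -/
def fol (x : S) (n : ℕ) : Set (List S) :=
  {t : List S | t.length = n ∧ ∃ u : List S, u ++ [x] ∈ A ∧ u ++ [x] ++ t ∈ A}

lemma fol_finite (x : S) (n : ℕ) : (fol A x n).Finite :=
  (List.finite_length_eq S n).subset fun _ ht => ht.1

noncomputable def folF (x : S) (n : ℕ) : Finset (List S) :=
  (fol_finite A x n).toFinset

lemma mem_folF {x : S} {n : ℕ} {t : List S} :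
    t ∈ folF A x n ↔ (t.length = n ∧ ∃ u : List S, u ++ [x] ∈ A ∧ u ++ [x] ++ t ∈ A) := by
  simp [folF, fol]

lemma folF_card_le (x : S) (n : ℕ) : (folF A x n).card ≤ Fintype.card S ^ n := by
  classical
  have hsub : folF A x n ⊆ (Finset.univ : Finset (Fin n → S)).image (fun f => List.ofFn f) := by
    intro t ht
    rw [mem_folF] at ht
    obtain ⟨h1, -⟩ := ht
    refine Finset.mem_image.2 ⟨fun i => t.get (Fin.cast h1.symm i), Finset.mem_univ _, ?_⟩
    apply List.ext_get
    · simp [h1]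
    · intro i hi1 hi2
      simp [List.get_ofFn]
  calc (folF A x n).card ≤ _ := Finset.card_le_card hsub
    _ ≤ (Finset.univ : Finset (Fin n → S)).card := Finset.card_image_le
    _ = Fintype.card S ^ n := by simp [Finset.card_univ]

lemma folF_card_split (hpref : ∀ u v : List S, u ++ v ∈ A → u ∈ A)
    (x : S) {m : ℕ} (hm : 1 ≤ m) (n : ℕ) {B : ℕ}
    (hB : ∀ y : S, (folF A y n).card ≤ B) :
    (folF A x (m + n)).card ≤ (folF A x m).card * B := by
  classical
  set inner : List S → Finset (List S) :=
    fun t₁ => ((t₁.getLast?.map (fun y => folF A y n)).getD ∅).image (fun t₂ => t₁ ++ t₂)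
    with hinner
  have hinner_le : ∀ t₁ : List S, (inner t₁).card ≤ B := by
    intro t₁
    rcases h : t₁.getLast? with _ | y
    · simp [hinner, h]
    · calc (inner t₁).card
          ≤ ((t₁.getLast?.map fun y => folF A y n).getD ∅).card := Finset.card_image_le
        _ ≤ B := by rw [h]; simpa using hB y
  have hsub : folF A x (m + n) ⊆ (folF A x m).biUnion inner := by
    intro t ht
    rw [mem_folF] at ht
    obtain ⟨hlen, u, hu1, hu2⟩ := ht
    have htt : t.take m ++ t.drop m = t := List.take_append_drop m t
    have hlen1 : (t.take m).length = m := by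
      rw [List.length_take, hlen]; omega
    have hne : t.take m ≠ [] := by
      intro h; rw [h] at hlen1; simp at hlen1; omega
    have hA1 : u ++ [x] ++ t.take m ∈ A := by
      apply hpref (u ++ [x] ++ t.take m) (t.drop m)
      rw [List.append_assoc (u ++ [x]), htt]; exact hu2
    refine Finset.mem_biUnion.2 ⟨t.take m, ?_, ?_⟩
    · rw [mem_folF]; exact ⟨hlen1, u, hu1, hA1⟩
    · have hlast := List.getLast?_eq_getLast (l := t.take m) hne
      set y := (t.take m).getLast hne with hy
      have hsplit : (t.take m).dropLast ++ [y] = t.take m := List.dropLast_append_getLast hne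
      have e1 : u ++ [x] ++ (t.take m).dropLast ++ [y] = u ++ [x] ++ t.take m := by
        rw [List.append_assoc (u ++ [x]), hsplit]
      have e2 : u ++ [x] ++ t.take m ++ t.drop m = u ++ [x] ++ t := by
        rw [List.append_assoc (u ++ [x]), htt]
      have ht2 : t.drop m ∈ folF A y n := by
        rw [mem_folF]
        refine ⟨by rw [List.length_drop, hlen]; omega,
          u ++ [x] ++ (t.take m).dropLast, ?_, ?_⟩
        · rw [e1]; exact hA1
        · rw [e1, e2]; exact hu2
      rw [hinner]
      simp only [hlast, Option.map_some, Option.getD_some]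
      exact Finset.mem_image.2 ⟨t.drop m, ht2, htt⟩
  calc (folF A x (m + n)).card ≤ _ := Finset.card_le_card hsub
    _ ≤ ∑ t₁ ∈ folF A x m, (inner t₁).card := Finset.card_biUnion_le
    _ ≤ ∑ _t₁ ∈ folF A x m, B := Finset.sum_le_sum fun t₁ _ => hinner_le t₁
    _ = (folF A x m).card * B := by rw [Finset.sum_const, smul_eq_mul]

lemma card_words_succ (hpref : ∀ u v : List S, u ++ v ∈ A → u ∈ A) (n : ℕ) :
    ({w | w ∈ A ∧ w.length = n + 1} : Set (List S)).ncard ≤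
      ∑ x : S, (folF A x n).card := by
  classical
  have hsub : ({w | w ∈ A ∧ w.length = n + 1} : Set (List S)) ⊆
      ↑((Finset.univ : Finset S).biUnion (fun x => (folF A x n).image (fun t => x :: t))) := by
    intro w hw
    obtain ⟨hwA, hwlen⟩ := hw
    have hne : w ≠ [] := by intro h; rw [h] at hwlen; simp at hwlen
    refine Finset.mem_coe.2 (Finset.mem_biUnion.2 ⟨w.head hne, Finset.mem_univ _, ?_⟩)
    refine Finset.mem_image.2 ⟨w.tail, ?_, List.cons_head_tail hne⟩
    have hw' : [w.head hne] ++ w.tail ∈ A := by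
      rw [List.singleton_append, List.cons_head_tail]; exact hwA
    rw [mem_folF]
    refine ⟨by simp [List.length_tail, hwlen], ([] : List S), ?_, ?_⟩
    · simpa using hpref [w.head hne] w.tail hw'
    · simpa using hw'
  calc ({w | w ∈ A ∧ w.length = n + 1} : Set (List S)).ncard
      ≤ (↑((Finset.univ : Finset S).biUnion
          (fun x => (folF A x n).image (fun t => x :: t))) : Set (List S)).ncard :=
        Set.ncard_le_ncard hsub (Finset.finite_toSet _)
    _ = ((Finset.univ : Finset S).biUnion
          (fun x => (folF A x n).image (fun t => x :: t))).card := Set.ncard_coe_finset _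
    _ ≤ ∑ x : S, ((folF A x n).image (fun t => x :: t)).card := Finset.card_biUnion_le
    _ ≤ ∑ x : S, (folF A x n).card := Finset.sum_le_sum fun x _ => Finset.card_image_le

end Stmt10Aux

open Stmt10Aux

open Filter in
theorem stmt_10 {S : Type*} [Fintype S] (A : Set (List S)) (α : ℝ) (hα : 1 < α)
    (Sx : S → Set S)
    (hpref : ∀ u v : List S, u ++ v ∈ A → u ∈ A)
    (hmarkov : ∀ w ∈ A, ∀ x : S, w.getLast? = some x →
      ∀ y : S, w ++ [y] ∈ A ↔ y ∈ Sx x)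
    (r : S → ℕ) (hr : ∀ x, 1 ≤ r x)
    (hcount : ∀ x : S,
      (Set.ncard {t : List S | t.length = r x ∧
        ∃ u : List S, u ++ [x] ∈ A ∧ u ++ [x] ++ t ∈ A} : ℝ) < α ^ r x) :
    limsup (fun N : ℕ =>
        (Set.ncard {w | w ∈ A ∧ w.length = N} : ℝ) ^ ((1 : ℝ) / N)) atTop < α := by
  classical
  have hα0 : (0 : ℝ) < α := by linarith
  set f : S → ℕ → ℕ := fun x n => (folF A x n).card with hf
  have hcount' : ∀ x : S, (f x (r x) : ℝ) < α ^ r x := by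
    intro x
    have h : ((fol A x (r x)).ncard : ℝ) < α ^ r x := hcount x
    rwa [Set.ncard_eq_toFinset_card _ (fol_finite A x (r x))] at h
  -- choose β
  set g : S → ℝ := fun x => ((f x (r x) : ℝ)) ^ ((r x : ℝ)⁻¹) with hg
  have hrne : ∀ x : S, (r x : ℝ) ≠ 0 := fun x => by
    have := hr x; positivity
  have hg_lt : ∀ x : S, g x < α := by
    intro x
    have h1 : (f x (r x) : ℝ) < α ^ ((r x : ℕ) : ℝ) := by
      rw [Real.rpow_natCast]; exact hcount' x
    have h2 : g x < (α ^ ((r x : ℕ) : ℝ)) ^ ((r x : ℝ)⁻¹) := by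
      apply Real.rpow_lt_rpow (Nat.cast_nonneg _) h1
      have := hr x
      positivity
    calc g x < _ := h2
      _ = α := by
        rw [← Real.rpow_mul hα0.le, mul_inv_cancel₀ (hrne x), Real.rpow_one]
  set F : Finset ℝ := insert ((α + 1) / 2) (Finset.univ.image g) with hF
  have hFne : F.Nonempty := ⟨(α + 1) / 2, by simp [hF]⟩
  set β : ℝ := F.max' hFne with hβ
  have hβα : β < α := by
    rw [hβ, Finset.max'_lt_iff]
    intro y hy
    rw [hF, Finset.mem_insert] at hy
    rcases hy with h | h
    · rw [h]; linarith
    · obtain ⟨x, -, hx⟩ := Finset.mem_image.1 h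
      rw [← hx]; exact hg_lt x
  have hβ1 : 1 < β := by
    have : (α + 1) / 2 ≤ β := Finset.le_max' _ _ (by simp [hF])
    linarith
  have hβ0 : (0 : ℝ) < β := by linarith
  have hgβ : ∀ x : S, g x ≤ β :=
    fun x => Finset.le_max' _ _ (by
      simp only [hF, Finset.mem_insert, Finset.mem_image]
      exact Or.inr ⟨x, Finset.mem_univ x, rfl⟩)
  have hfβ : ∀ x : S, (f x (r x) : ℝ) ≤ β ^ r x := by
    intro x
    have h0 : (0 : ℝ) ≤ (f x (r x) : ℝ) := Nat.cast_nonneg _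
    have h1 : (g x) ^ ((r x : ℕ) : ℝ) ≤ β ^ ((r x : ℕ) : ℝ) :=
      Real.rpow_le_rpow (Real.rpow_nonneg h0 _) (hgβ x) (Nat.cast_nonneg _)
    rw [hg] at h1
    rw [← Real.rpow_mul h0, inv_mul_cancel₀ (hrne x), Real.rpow_one,
      Real.rpow_natCast] at h1
    exact h1
  set R : ℕ := Finset.univ.sup r with hR
  set C : ℝ := (Fintype.card S : ℝ) ^ R with hC
  -- main induction
  have key : ∀ n : ℕ, ∀ x : S, (f x n : ℝ) ≤ C * β ^ n := by
    intro n
    induction n using Nat.strong_induction_on with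
    | _ n ih =>
      intro x
      have hCS1 : (1 : ℝ) ≤ (Fintype.card S : ℝ) := by
        have : 0 < Fintype.card S := Fintype.card_pos_iff.2 ⟨x⟩
        exact_mod_cast this
      have hC1 : (1 : ℝ) ≤ C := one_le_pow₀ hCS1
      by_cases hcase : n < r x
      · have h1 : (f x n : ℝ) ≤ (Fintype.card S : ℝ) ^ n := by
          exact_mod_cast folF_card_le A x n
        have h2 : ((Fintype.card S : ℝ)) ^ n ≤ C := by
          apply pow_le_pow_right₀ hCS1
          have : r x ≤ R := Finset.le_sup (Finset.mem_univ x)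
          omega
        have h3 : C ≤ C * β ^ n :=
          le_mul_of_one_le_right (by linarith) (one_le_pow₀ hβ1.le)
        linarith
      · push_neg at hcase
        obtain ⟨b, hb⟩ : ∃ b, n = r x + b := ⟨n - r x, by omega⟩
        subst hb
        have hblt : b < r x + b := by have := hr x; omega
        obtain ⟨x₀, -, hx₀⟩ := Finset.exists_mem_eq_sup (Finset.univ : Finset S)
          ⟨x, Finset.mem_univ x⟩ (fun y => f y b)
        have hB : ∀ y : S, (folF A y b).card ≤ f x₀ b := by
          intro y
          show f y b ≤ f x₀ b
          rw [← hx₀]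
          exact Finset.le_sup (f := fun y => f y b) (Finset.mem_univ y)
        have hsplit := folF_card_split A hpref x (hr x) b (B := f x₀ b) hB
        have hcast : (f x (r x + b) : ℝ) ≤ (f x (r x) : ℝ) * (f x₀ b : ℝ) := by
          exact_mod_cast hsplit
        have h1 : (f x (r x) : ℝ) * (f x₀ b : ℝ) ≤ β ^ r x * (C * β ^ b) :=
          mul_le_mul (hfβ x) (ih b hblt x₀) (Nat.cast_nonneg _) (by positivity)
        calc (f x (r x + b) : ℝ) ≤ _ := hcast
          _ ≤ β ^ r x * (C * β ^ b) := h1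
          _ = C * β ^ (r x + b) := by rw [pow_add]; ring
  set u : ℕ → ℕ := fun N => Set.ncard {w | w ∈ A ∧ w.length = N} with husets
  set D : ℝ := max 1 ((Fintype.card S : ℝ) * C) with hD
  have hD1 : (1 : ℝ) ≤ D := le_max_left _ _
  have hD0 : (0 : ℝ) < D := by linarith
  have hC0 : (0 : ℝ) ≤ C := by positivity
  have hbound : ∀ N : ℕ, 1 ≤ N → (u N : ℝ) ≤ D * β ^ N := by
    intro N hN
    obtain ⟨n, rfl⟩ : ∃ n, N = n + 1 := ⟨N - 1, by omega⟩
    have h1 : (u (n + 1) : ℝ) ≤ ∑ x : S, (f x n : ℝ) := by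
      have := card_words_succ A hpref n
      have h2 : (u (n + 1) : ℝ) ≤ ((∑ x : S, (folF A x n).card : ℕ) : ℝ) := by
        exact_mod_cast this
      simpa using h2
    have h2 : ∑ x : S, (f x n : ℝ) ≤ ∑ _x : S, C * β ^ n :=
      Finset.sum_le_sum fun x _ => key n x
    have h3 : ∑ _x : S, C * β ^ n = (Fintype.card S : ℝ) * (C * β ^ n) := by
      rw [Finset.sum_const, Finset.card_univ, nsmul_eq_mul]
    have h4 : (Fintype.card S : ℝ) * (C * β ^ n) ≤ D * β ^ n := by
      have : (Fintype.card S : ℝ) * C ≤ D := le_max_right _ _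
      have hb0 : (0 : ℝ) ≤ β ^ n := by positivity
      calc (Fintype.card S : ℝ) * (C * β ^ n) = ((Fintype.card S : ℝ) * C) * β ^ n := by ring
        _ ≤ D * β ^ n := mul_le_mul_of_nonneg_right this hb0
    have h5 : D * β ^ n ≤ D * β ^ (n + 1) := by
      apply mul_le_mul_of_nonneg_left _ hD0.le
      exact pow_le_pow_right₀ hβ1.le (by omega)
    linarith
  have hrpow : ∀ N : ℕ, 1 ≤ N →
      (u N : ℝ) ^ ((1 : ℝ) / N) ≤ D ^ ((1 : ℝ) / N) * β := by
    intro N hN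
    have hNne : (N : ℝ) ≠ 0 := Nat.cast_ne_zero.2 (by omega)
    have h1 : (u N : ℝ) ^ ((1 : ℝ) / N) ≤ (D * β ^ N) ^ ((1 : ℝ) / N) :=
      Real.rpow_le_rpow (Nat.cast_nonneg _) (hbound N hN) (by positivity)
    have h2 : (D * β ^ N : ℝ) ^ ((1 : ℝ) / N) = D ^ ((1 : ℝ) / N) * β := by
      rw [Real.mul_rpow hD0.le (by positivity)]
      congr 1
      rw [← Real.rpow_natCast β N, ← Real.rpow_mul hβ0.le, mul_one_div,
        div_self hNne, Real.rpow_one]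
    rw [h2] at h1
    exact h1
  have h4 : Tendsto (fun N : ℕ => D ^ ((1 : ℝ) / N)) atTop (nhds 1) := by
    have h3 : Tendsto (fun N : ℕ => Real.log D * (1 / (N : ℝ))) atTop (nhds 0) := by
      simpa using tendsto_one_div_atTop_nhds_zero_nat.const_mul (Real.log D)
    have h5 := (Real.continuous_exp.tendsto 0).comp h3
    simp only [Function.comp_def, Real.exp_zero] at h5
    have heq : (fun N : ℕ => Real.exp (Real.log D * (1 / (N : ℝ)))) =
        fun N : ℕ => D ^ ((1 : ℝ) / N) :=
      funext fun N => (Real.rpow_def_of_pos hD0 _).symm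
    rwa [heq] at h5
  have T : Tendsto (fun N : ℕ => D ^ ((1 : ℝ) / N) * β) atTop (nhds β) := by
    have := h4.mul_const β
    rwa [one_mul] at this
  set β' : ℝ := (β + α) / 2 with hβ'
  have hββ' : β < β' := by rw [hβ']; linarith
  have hβ'α : β' < α := by rw [hβ']; linarith
  have hev : ∀ᶠ N : ℕ in atTop, (u N : ℝ) ^ ((1 : ℝ) / N) ≤ β' := by
    filter_upwards [T.eventually_lt_const hββ', eventually_ge_atTop 1] with N h1 h2
    exact le_trans (hrpow N h2) h1.le
  refine lt_of_le_of_lt (limsup_le_of_le ?_ hev) hβ'α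
  exact isCoboundedUnder_le_of_le atTop
    (fun N => Real.rpow_nonneg (Nat.cast_nonneg _) _)
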